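/- Let (H, g) be a finite type unimodular pivotal Hopf G-coalgebra over a field k and let t be a right modified trace on H-pmod. Define ν_α : H_α → k by ν_α(h) := t_{H_α}(R_h), where R_h : H_α → H_α, x ↦ xh, is right multiplication on the left regular module. Then ν = (ν_α)_{α∈G} satisfies the defining relation of a symmetrised right G-integral: ν_α(h_{(1)}) · g_β h_{(2)} = ν_{αβ}(h) · 1_β for all α, β ∈ G and h ∈ H_{αβ}, where Δ_{α,β}(h) = h_{(1)} ⊗ h_{(2)}; equivalently, the family μ_α(x) := ν_α(g_α⁻¹ x) is a right G-integral for H. -/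

import Mathlib

open scoped TensorProduct

/-- Transport along an equality of indices, as an algebra isomorphism. -/
def castAlg (k : Type) [CommSemiring k] {G : Type} {H : G → Type}
    [∀ γ : G, Ring (H γ)] [∀ γ : G, Algebra k (H γ)]
    {γ γ' : G} (h : γ = γ') : H γ ≃ₐ[k] H γ' := by
  subst h; exact AlgEquiv.refl

/-- A Hopf `G`-coalgebra over a field `k`. -/
structure HopfGCoalgebra (k G : Type) [Field k] [Group G] (H : G → Type)
    [∀ γ : G, Ring (H γ)] [∀ γ : G, Algebra k (H γ)] where
  Δ : ∀ α β : G, H (α * β) →ₐ[k] (H α ⊗[k] H β)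
  ε : H (1 : G) →ₐ[k] k
  S : ∀ γ : G, H γ →ₗ[k] H γ⁻¹
  coassoc : ∀ (α β γ : G) (x : H (α * β * γ)),
    (TensorProduct.map (Δ α β).toLinearMap LinearMap.id) (Δ (α * β) γ x)
      = (TensorProduct.assoc k (H α) (H β) (H γ)).symm
          ((TensorProduct.map LinearMap.id (Δ β γ).toLinearMap)
            (Δ α (β * γ) (castAlg k (mul_assoc α β γ) x)))
  counit_right : ∀ (α : G) (x : H (α * 1)),
    (TensorProduct.rid k (H α)) ((TensorProduct.map LinearMap.id ε.toLinearMap) (Δ α 1 x))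
      = castAlg k (mul_one α) x
  counit_left : ∀ (α : G) (x : H (1 * α)),
    (TensorProduct.lid k (H α)) ((TensorProduct.map ε.toLinearMap LinearMap.id) (Δ 1 α x))
      = castAlg k (one_mul α) x
  antipode_left : ∀ (α : G) (x : H (α⁻¹ * α)),
    (LinearMap.mul' k (H α))
      ((TensorProduct.map ((castAlg k (inv_inv α)).toLinearMap ∘ₗ S α⁻¹) LinearMap.id)
        (Δ α⁻¹ α x))
      = ε (castAlg k (inv_mul_cancel α) x) • 1
  antipode_right : ∀ (α : G) (x : H (α * α⁻¹)),
    (LinearMap.mul' k (H α))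
      ((TensorProduct.map LinearMap.id ((castAlg k (inv_inv α)).toLinearMap ∘ₗ S α⁻¹))
        (Δ α α⁻¹ x))
      = ε (castAlg k (mul_inv_cancel α) x) • 1

namespace HopfGCoalgebra

variable {k G : Type} [Field k] [Group G] {H : G → Type}
  [∀ γ : G, Ring (H γ)] [∀ γ : G, Algebra k (H γ)]

/-- A family of linear forms is a right `G`-integral. -/
def IsRightIntegral (D : HopfGCoalgebra k G H) (μ : ∀ γ : G, H γ →ₗ[k] k) : Prop :=
  ∀ (α β : G) (x : H (α * β)),
    (TensorProduct.lid k (H β)) ((TensorProduct.map (μ α) LinearMap.id) (D.Δ α β x))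
      = μ (α * β) x • 1

/-- A family of linear forms is a left `G`-integral. -/
def IsLeftIntegral (D : HopfGCoalgebra k G H) (μ : ∀ γ : G, H γ →ₗ[k] k) : Prop :=
  ∀ (α β : G) (x : H (α * β)),
    (TensorProduct.rid k (H α)) ((TensorProduct.map LinearMap.id (μ β)) (D.Δ α β x))
      = μ (α * β) x • 1

/-- A family of invertible elements is a pivot. -/
structure IsPivot (D : HopfGCoalgebra k G H) (g : ∀ γ : G, (H γ)ˣ) : Prop where
  delta : ∀ α β : G, D.Δ α β (g (α * β) : H (α * β)) = (g α : H α) ⊗ₜ[k] (g β : H β)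
  counit : D.ε (g 1 : H 1) = 1
  antipode : ∀ (α : G) (x : H α),
    castAlg k (inv_inv α) (D.S α⁻¹ (D.S α x)) = (g α : H α) * x * ((g α)⁻¹ : (H α)ˣ)

/-- `H` is unimodular if `H₁` admits a nonzero two-sided cointegral. -/
def IsUnimodular (D : HopfGCoalgebra k G H) : Prop :=
  ∃ Λ : H 1, Λ ≠ 0 ∧ ∀ h : H 1, h * Λ = D.ε h • Λ ∧ Λ * h = D.ε h • Λ

/-- A `G`-comodulus for a right `G`-integral `μ`. -/
structure IsComodulus (D : HopfGCoalgebra k G H) (μ : ∀ γ : G, H γ →ₗ[k] k)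
    (a : ∀ γ : G, (H γ)ˣ) : Prop where
  delta : ∀ α β : G, D.Δ α β (a (α * β) : H (α * β)) = (a α : H α) ⊗ₜ[k] (a β : H β)
  counit : D.ε (a 1 : H 1) = 1
  rel : ∀ (α β : G) (x : H (α * β)),
    (TensorProduct.rid k (H α)) ((TensorProduct.map LinearMap.id (μ β)) (D.Δ α β x))
      = μ (α * β) x • (a α : H α)

end HopfGCoalgebra

namespace HopfGCoalgebra

variable {k G : Type} [Field k] [Group G] {H : G → Type}
  [∀ γ : G, Ring (H γ)] [∀ γ : G, Algebra k (H γ)]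

/-- The trivial `H₁`-module structure on a `k`-vector space, `h • w = ε(h) • w`. -/
def trivialModule (D : HopfGCoalgebra k G H) (W : Type) [AddCommGroup W] [Module k W] :
    Module (H (1 : G)) W :=
  Module.compHom W D.ε.toRingHom

theorem trivialModuleTower (D : HopfGCoalgebra k G H) (W : Type) [AddCommGroup W]
    [Module k W] :
    letI := D.trivialModule W
    IsScalarTower k (H (1 : G)) W := by
  letI := D.trivialModule W
  refine ⟨fun c h w => ?_⟩
  show D.ε (c • h) • w = c • (D.ε h • w)
  rw [map_smul, smul_eq_mul, mul_smul]

/-- The representation of `H_γ` (for `γ = αβ`) on `P ⊗ W` obtained from an `H_α`-module `P`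
and an `H_β`-module `W` through the coproduct `Δ_{α,β}`. -/
noncomputable def deltaRep (D : HopfGCoalgebra k G H) (α β γ : G) (hγ : γ = α * β)
    (P W : Type) [AddCommGroup P] [Module k P] [Module (H α) P] [IsScalarTower k (H α) P]
    [AddCommGroup W] [Module k W] [Module (H β) W] [IsScalarTower k (H β) W] :
    H γ →ₐ[k] Module.End k (P ⊗[k] W) :=
  (Module.endTensorEndAlgHom.comp
      (Algebra.TensorProduct.map (Algebra.lsmul k k P) (Algebra.lsmul k k W))).comp
    ((D.Δ α β).comp (castAlg k hγ).toAlgHom)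

/-- The `H_γ`-module structure on `P ⊗ W` (for `γ = αβ`) induced by `Δ_{α,β}`. -/
noncomputable def tensorModule (D : HopfGCoalgebra k G H) (α β γ : G) (hγ : γ = α * β)
    (P W : Type) [AddCommGroup P] [Module k P] [Module (H α) P] [IsScalarTower k (H α) P]
    [AddCommGroup W] [Module k W] [Module (H β) W] [IsScalarTower k (H β) W] :
    Module (H γ) (P ⊗[k] W) :=
  Module.compHom (P ⊗[k] W) (D.deltaRep α β γ hγ P W).toRingHom

theorem tensorModuleTower (D : HopfGCoalgebra k G H) (α β γ : G) (hγ : γ = α * β)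
    (P W : Type) [AddCommGroup P] [Module k P] [Module (H α) P] [IsScalarTower k (H α) P]
    [AddCommGroup W] [Module k W] [Module (H β) W] [IsScalarTower k (H β) W] :
    letI := D.tensorModule α β γ hγ P W
    IsScalarTower k (H γ) (P ⊗[k] W) := by
  letI := D.tensorModule α β γ hγ P W
  refine ⟨fun c h x => ?_⟩
  show (D.deltaRep α β γ hγ P W (c • h)) x = c • (D.deltaRep α β γ hγ P W h) x
  rw [map_smul]
  rfl

/-- The right partial trace `tr^r_W(f)` of a `k`-linear map `f : P ⊗ W → P ⊗ W`, computed
with the duality morphisms of the pivotal structure (`gβ` is the pivot in degree `β`). -/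
noncomputable def trR (β : G) (P W : Type)
    [AddCommGroup P] [Module k P]
    [AddCommGroup W] [Module k W] [Module (H β) W] [IsScalarTower k (H β) W]
    [FiniteDimensional k W]
    (gβ : H β) (f : (P ⊗[k] W) →ₗ[k] (P ⊗[k] W)) : P →ₗ[k] P :=
  (TensorProduct.rid k P).toLinearMap
    ∘ₗ TensorProduct.map LinearMap.id
        (contractRight k W ∘ₗ TensorProduct.map (Algebra.lsmul k k W gβ) LinearMap.id)
    ∘ₗ (TensorProduct.assoc k P W (Module.Dual k W)).toLinearMap
    ∘ₗ TensorProduct.map f LinearMap.id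
    ∘ₗ (TensorProduct.assoc k P W (Module.Dual k W)).symm.toLinearMap
    ∘ₗ TensorProduct.map LinearMap.id (coevaluation k W)
    ∘ₗ (TensorProduct.rid k P).symm.toLinearMap

/-- The left partial trace `tr^l_W(f)` of a `k`-linear map `f : W ⊗ P → W ⊗ P`, computed
with the duality morphisms of the pivotal structure (`gβinv` is the inverse of the pivot in
degree `β`). -/
noncomputable def trL (β : G) (W P : Type)
    [AddCommGroup P] [Module k P]
    [AddCommGroup W] [Module k W] [Module (H β) W] [IsScalarTower k (H β) W]
    [FiniteDimensional k W]
    (gβinv : H β) (f : (W ⊗[k] P) →ₗ[k] (W ⊗[k] P)) : P →ₗ[k] P :=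
  (TensorProduct.lid k P).toLinearMap
    ∘ₗ TensorProduct.map (contractLeft k W) LinearMap.id
    ∘ₗ (TensorProduct.assoc k (Module.Dual k W) W P).symm.toLinearMap
    ∘ₗ TensorProduct.map LinearMap.id f
    ∘ₗ (TensorProduct.assoc k (Module.Dual k W) W P).toLinearMap
    ∘ₗ TensorProduct.map
        ((TensorProduct.comm k W (Module.Dual k W)).toLinearMap
          ∘ₗ TensorProduct.map (Algebra.lsmul k k W gβinv) LinearMap.id
          ∘ₗ coevaluation k W)
        LinearMap.id
    ∘ₗ (TensorProduct.lid k P).symm.toLinearMap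

end HopfGCoalgebra

/-- The data of a `k`-linear form on `End_{H_γ}(P)` for every `γ ∈ G` and every
finite-dimensional projective `H_γ`-module `P`. -/
abbrev TraceData (k G : Type) [Field k] [Group G] (H : G → Type)
    [∀ γ : G, Ring (H γ)] [∀ γ : G, Algebra k (H γ)] : Type 1 :=
  ∀ (γ : G) (P : Type) [AddCommGroup P] [Module k P] [Module (H γ) P]
    [IsScalarTower k (H γ) P] [FiniteDimensional k P] [Module.Projective (H γ) P],
    (P →ₗ[H γ] P) →ₗ[k] k

namespace HopfGCoalgebra

variable {k G : Type} [Field k] [Group G] {H : G → Type}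
  [∀ γ : G, Ring (H γ)] [∀ γ : G, Algebra k (H γ)]

/-- A cyclic trace on `H`-pmod. -/
def IsCyclicTrace (t : TraceData k G H) : Prop :=
  ∀ (γ : G) (P Q : Type)
    [AddCommGroup P] [Module k P] [Module (H γ) P] [IsScalarTower k (H γ) P]
    [FiniteDimensional k P] [Module.Projective (H γ) P]
    [AddCommGroup Q] [Module k Q] [Module (H γ) Q] [IsScalarTower k (H γ) Q]
    [FiniteDimensional k Q] [Module.Projective (H γ) Q]
    (f : P →ₗ[H γ] Q) (g : Q →ₗ[H γ] P),
    t γ P (g.comp f) = t γ Q (f.comp g)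

/-- The right partial trace property of a trace `t`:
`t_{P⊗W}(f) = t_P(tr^r_W(f))` for every projective `H_α`-module `P`, finite-dimensional
`H_β`-module `W`, and `H_{αβ}`-linear endomorphism `f` of `P ⊗ W`. -/
def HasRightPartialTraceProperty (D : HopfGCoalgebra k G H) (g : ∀ γ : G, (H γ)ˣ)
    (t : TraceData k G H) : Prop :=
  ∀ (α β : G) (P W : Type)
    [AddCommGroup P] [Module k P] [Module (H α) P] [IsScalarTower k (H α) P]
    [FiniteDimensional k P] [Module.Projective (H α) P]
    [AddCommGroup W] [Module k W] [Module (H β) W] [IsScalarTower k (H β) W]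
    [FiniteDimensional k W],
    letI := D.tensorModule α β (α * β) rfl P W
    haveI := D.tensorModuleTower α β (α * β) rfl P W
    ∀ [Module.Projective (H (α * β)) (P ⊗[k] W)]
      (f : (P ⊗[k] W) →ₗ[H (α * β)] (P ⊗[k] W)) (f' : P →ₗ[H α] P),
      f'.restrictScalars k = trR β P W (g β : H β) (f.restrictScalars k) →
      t (α * β) (P ⊗[k] W) f = t α P f'

/-- The left partial trace property of a trace `t`:
`t_{W⊗P}(f) = t_P(tr^l_W(f))` for every projective `H_α`-module `P`, finite-dimensional
`H_β`-module `W`, and `H_{βα}`-linear endomorphism `f` of `W ⊗ P`. -/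
def HasLeftPartialTraceProperty (D : HopfGCoalgebra k G H) (g : ∀ γ : G, (H γ)ˣ)
    (t : TraceData k G H) : Prop :=
  ∀ (α β : G) (P W : Type)
    [AddCommGroup P] [Module k P] [Module (H α) P] [IsScalarTower k (H α) P]
    [FiniteDimensional k P] [Module.Projective (H α) P]
    [AddCommGroup W] [Module k W] [Module (H β) W] [IsScalarTower k (H β) W]
    [FiniteDimensional k W],
    letI := D.tensorModule β α (β * α) rfl W P
    haveI := D.tensorModuleTower β α (β * α) rfl W P
    ∀ [Module.Projective (H (β * α)) (W ⊗[k] P)]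
      (f : (W ⊗[k] P) →ₗ[H (β * α)] (W ⊗[k] P)) (f' : P →ₗ[H α] P),
      f'.restrictScalars k = trL β W P (((g β)⁻¹ : (H β)ˣ) : H β) (f.restrictScalars k) →
      t (β * α) (W ⊗[k] P) f = t α P f'

/-- A right modified trace on `H`-pmod. -/
def IsRightModifiedTrace (D : HopfGCoalgebra k G H) (g : ∀ γ : G, (H γ)ˣ)
    (t : TraceData k G H) : Prop :=
  IsCyclicTrace t ∧ D.HasRightPartialTraceProperty g t

/-- A left modified trace on `H`-pmod. -/
def IsLeftModifiedTrace (D : HopfGCoalgebra k G H) (g : ∀ γ : G, (H γ)ˣ)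
    (t : TraceData k G H) : Prop :=
  IsCyclicTrace t ∧ D.HasLeftPartialTraceProperty g t

end HopfGCoalgebra

namespace HopfGCoalgebra

variable {k G : Type} [Field k] [Group G] {H : G → Type}
  [∀ γ : G, Ring (H γ)] [∀ γ : G, Algebra k (H γ)]

/-- Right multiplication `R_h : x ↦ xh` as an endomorphism of the left regular module. -/
def rmul (γ : G) (h : H γ) : H γ →ₗ[H γ] H γ where
  toFun x := x * h
  map_add' x y := add_mul x y h
  map_smul' c x := by simp [smul_eq_mul, mul_assoc]

/-- Right multiplication as a `k`-linear map `h ↦ R_h`. -/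
def rmulL (γ : G) : H γ →ₗ[k] (H γ →ₗ[H γ] H γ) where
  toFun h := rmul γ h
  map_add' h h' := LinearMap.ext fun x => mul_add x h h'
  map_smul' c h := LinearMap.ext fun x => mul_smul_comm c x h

/-- The linear form `ν_γ : h ↦ t_{H_γ}(R_h)` associated with a trace `t`. -/
noncomputable def nuForm [∀ γ : G, FiniteDimensional k (H γ)] (t : TraceData k G H)
    (γ : G) : H γ →ₗ[k] k :=
  (t γ (H γ)).comp (rmulL γ)

end HopfGCoalgebra


/-! ### Auxiliary lemmas -/

set_option linter.unusedSectionVars false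

set_option maxHeartbeats 1000000
set_option synthInstance.maxHeartbeats 400000
set_option linter.unusedSectionVars false

namespace HopfGCoalgebra

open TensorProduct

variable {k G : Type} [Field k] [Group G] {H : G → Type}
  [∀ γ : G, Ring (H γ)] [∀ γ : G, Algebra k (H γ)]
  (D : HopfGCoalgebra k G H)

theorem castAlg_castAlg {a b c : G} (h1 : a = b) (h2 : b = c) (x : H a) :
    castAlg k h2 (castAlg k h1 x) = castAlg k (h1.trans h2) x := by subst h1 h2; rfl

theorem castAlg_self {a : G} (h : a = a) (x : H a) : castAlg k h x = x := rfl

theorem delta_castAlg_left {a a' : G} (b : G) (ha : a = a') (hab : a * b = a' * b)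
    (x : H (a * b)) :
    D.Δ a' b (castAlg k hab x)
      = TensorProduct.map (castAlg k ha).toLinearMap LinearMap.id (D.Δ a b x) := by
  subst ha
  rw [castAlg_self]
  rw [show ((castAlg k (rfl : a = a)).toLinearMap : H a →ₗ[k] H a) = LinearMap.id from rfl,
    TensorProduct.map_id, LinearMap.id_apply]

theorem delta_castAlg_right {b b' : G} (a : G) (hb : b = b') (hab : a * b = a * b')
    (x : H (a * b)) :
    D.Δ a b' (castAlg k hab x)
      = TensorProduct.map LinearMap.id (castAlg k hb).toLinearMap (D.Δ a b x) := by
  subst hb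
  rw [castAlg_self]
  rw [show ((castAlg k (rfl : b = b)).toLinearMap : H b →ₗ[k] H b) = LinearMap.id from rfl,
    TensorProduct.map_id, LinearMap.id_apply]

theorem S_castAlg {c c' : G} (h : c = c') (h' : c⁻¹ = c'⁻¹) (x : H c) :
    D.S c' (castAlg k h x) = castAlg k h' (D.S c x) := by subst h; rfl

/-- Counit collapse, right version. -/
theorem counit_collapse_right (a c : G) (hc : c = 1) (hac : a = a * c) (x : H a) :
    (TensorProduct.rid k (H a))
      ((TensorProduct.map LinearMap.id (D.ε.toLinearMap ∘ₗ (castAlg k hc).toLinearMap))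
        (D.Δ a c (castAlg k hac x))) = x := by
  subst hc
  rw [show (D.ε.toLinearMap ∘ₗ (castAlg k (rfl : (1:G) = 1)).toLinearMap) = D.ε.toLinearMap
    from rfl]
  rw [D.counit_right a, castAlg_castAlg, castAlg_self]

/-- Counit collapse, left version. -/
theorem counit_collapse_left (a c : G) (hc : c = 1) (hca : a = c * a) (x : H a) :
    (TensorProduct.lid k (H a))
      ((TensorProduct.map (D.ε.toLinearMap ∘ₗ (castAlg k hc).toLinearMap) LinearMap.id)
        (D.Δ c a (castAlg k hca x))) = x := by
  subst hc
  rw [show (D.ε.toLinearMap ∘ₗ (castAlg k (rfl : (1:G) = 1)).toLinearMap) = D.ε.toLinearMap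
    from rfl]
  rw [D.counit_left a, castAlg_castAlg, castAlg_self]

/-- `m ∘ (S ⊗ id) ∘ Δ_{γ,γ⁻¹} = η ∘ ε`. -/
theorem antipode_collapse_SL (γ : G) (v : H (γ * γ⁻¹)) :
    (LinearMap.mul' k (H γ⁻¹))
      ((TensorProduct.map (D.S γ) LinearMap.id) (D.Δ γ γ⁻¹ v))
      = D.ε (castAlg k (mul_inv_cancel γ) v) • 1 := by
  have h1 : γ * γ⁻¹ = γ⁻¹⁻¹ * γ⁻¹ := by rw [inv_inv]
  have ax := D.antipode_left γ⁻¹ (castAlg k h1 v)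
  rw [delta_castAlg_left D γ⁻¹ (inv_inv γ).symm h1 v] at ax
  rw [← LinearMap.comp_apply
      (TensorProduct.map ((castAlg k (inv_inv γ⁻¹)).toLinearMap ∘ₗ D.S γ⁻¹⁻¹) LinearMap.id)
      (TensorProduct.map (castAlg k (inv_inv γ).symm).toLinearMap LinearMap.id),
    ← TensorProduct.map_comp] at ax
  have hS : ((castAlg k (inv_inv γ⁻¹)).toLinearMap ∘ₗ D.S γ⁻¹⁻¹) ∘ₗ
      (castAlg k (inv_inv γ).symm).toLinearMap = D.S γ := by
    ext x
    simp only [LinearMap.comp_apply, AlgEquiv.toLinearMap_apply]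
    rw [S_castAlg D (inv_inv γ).symm (by rw [inv_inv]) x, castAlg_castAlg, castAlg_self]
  rw [hS, LinearMap.id_comp, castAlg_castAlg] at ax
  exact ax

/-- `m ∘ (id ⊗ S) ∘ Δ_{γ⁻¹,γ} = η ∘ ε`. -/
theorem antipode_collapse_SR (γ : G) (v : H (γ⁻¹ * γ)) :
    (LinearMap.mul' k (H γ⁻¹))
      ((TensorProduct.map LinearMap.id (D.S γ)) (D.Δ γ⁻¹ γ v))
      = D.ε (castAlg k (inv_mul_cancel γ) v) • 1 := by
  have h1 : γ⁻¹ * γ = γ⁻¹ * γ⁻¹⁻¹ := by rw [inv_inv]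
  have ax := D.antipode_right γ⁻¹ (castAlg k h1 v)
  rw [delta_castAlg_right D γ⁻¹ (inv_inv γ).symm h1 v] at ax
  rw [← LinearMap.comp_apply
      (TensorProduct.map LinearMap.id ((castAlg k (inv_inv γ⁻¹)).toLinearMap ∘ₗ D.S γ⁻¹⁻¹))
      (TensorProduct.map LinearMap.id (castAlg k (inv_inv γ).symm).toLinearMap),
    ← TensorProduct.map_comp] at ax
  have hS : ((castAlg k (inv_inv γ⁻¹)).toLinearMap ∘ₗ D.S γ⁻¹⁻¹) ∘ₗ
      (castAlg k (inv_inv γ).symm).toLinearMap = D.S γ := by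
    ext x
    simp only [LinearMap.comp_apply, AlgEquiv.toLinearMap_apply]
    rw [S_castAlg D (inv_inv γ).symm (by rw [inv_inv]) x, castAlg_castAlg, castAlg_self]
  rw [hS, LinearMap.id_comp, castAlg_castAlg] at ax
  exact ax

theorem S_one (γ : G) : D.S γ (1 : H γ) = 1 := by
  have h := antipode_collapse_SL D γ (1 : H (γ * γ⁻¹))
  rw [map_one (D.Δ γ γ⁻¹), Algebra.TensorProduct.one_def, TensorProduct.map_tmul,
    LinearMap.id_apply, LinearMap.mul'_apply, mul_one,
    map_one (castAlg k (mul_inv_cancel γ)), map_one D.ε, one_smul] at h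
  exact h

end HopfGCoalgebra

set_option maxHeartbeats 1000000
set_option synthInstance.maxHeartbeats 400000
set_option linter.unusedSectionVars false

namespace HopfGCoalgebra

open TensorProduct

variable {k G : Type} [Field k] [Group G] {H : G → Type}
  [∀ γ : G, Ring (H γ)] [∀ γ : G, Algebra k (H γ)]
  (D : HopfGCoalgebra k G H)

/-- The antipode is antimultiplicative. -/
theorem S_mul (γ : G) (x y : H γ) : D.S γ (x * y) = D.S γ y * D.S γ x := by
  have e1 : γ = γ * γ⁻¹ * γ := by rw [mul_inv_cancel, one_mul]
  have e2 : γ = γ * (γ⁻¹ * γ) := by rw [inv_mul_cancel, mul_one]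
  set ρ : (H γ ⊗[k] H γ) →ₗ[k] H γ⁻¹ :=
    LinearMap.mul' k (H γ⁻¹) ∘ₗ TensorProduct.map (D.S γ) (D.S γ)
      ∘ₗ (TensorProduct.comm k (H γ) (H γ)).toLinearMap with hρ
  set θ : ((H γ ⊗[k] H γ⁻¹) ⊗[k] (H γ ⊗[k] H γ⁻¹)) →ₗ[k] H γ⁻¹ :=
    LinearMap.mul' k (H γ⁻¹) ∘ₗ TensorProduct.map (D.S γ) LinearMap.id
      ∘ₗ LinearMap.mul' k (H γ ⊗[k] H γ⁻¹) with hθ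
  set L : (((H γ ⊗[k] H γ⁻¹) ⊗[k] H γ) ⊗[k] ((H γ ⊗[k] H γ⁻¹) ⊗[k] H γ)) →ₗ[k] H γ⁻¹ :=
    LinearMap.mul' k (H γ⁻¹) ∘ₗ TensorProduct.map θ ρ
      ∘ₗ (TensorProduct.tensorTensorTensorComm k (H γ ⊗[k] H γ⁻¹) (H γ)
          (H γ ⊗[k] H γ⁻¹) (H γ)).toLinearMap with hL
  have ρapp : ∀ c c' : H γ, ρ (c ⊗ₜ c') = D.S γ c' * D.S γ c := by
    intro c c'
    simp [hρ, LinearMap.mul'_apply]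
  have Lapp : ∀ (U V : (H γ ⊗[k] H γ⁻¹)) (c c' : H γ),
      L ((U ⊗ₜ c) ⊗ₜ (V ⊗ₜ c')) = θ (U ⊗ₜ V) * ρ (c ⊗ₜ c') := by
    intro U V c c'
    simp [hL, LinearMap.mul'_apply]
  have θΔΔ : ∀ p q : H (γ * γ⁻¹),
      θ ((D.Δ γ γ⁻¹ p) ⊗ₜ (D.Δ γ γ⁻¹ q))
        = (D.ε (castAlg k (mul_inv_cancel γ) p)
            * D.ε (castAlg k (mul_inv_cancel γ) q)) • 1 := by
    intro p q
    have h1 : θ ((D.Δ γ γ⁻¹ p) ⊗ₜ (D.Δ γ γ⁻¹ q))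
        = (LinearMap.mul' k (H γ⁻¹))
            ((TensorProduct.map (D.S γ) LinearMap.id) (D.Δ γ γ⁻¹ (p * q))) := by
      simp [hθ, LinearMap.mul'_apply, ← map_mul]
    rw [h1, antipode_collapse_SL, map_mul, map_mul]
  -- the left-handed evaluation
  set colL : (H (γ * γ⁻¹) ⊗[k] H γ) →ₗ[k] H γ :=
    (TensorProduct.lid k (H γ)).toLinearMap ∘ₗ
      TensorProduct.map (D.ε.toLinearMap ∘ₗ (castAlg k (mul_inv_cancel γ)).toLinearMap)
        LinearMap.id with hcolL
  have E1 : ∀ Pu Qu : H (γ * γ⁻¹) ⊗[k] H γ,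
      L (((TensorProduct.map (D.Δ γ γ⁻¹).toLinearMap LinearMap.id) Pu) ⊗ₜ
          ((TensorProduct.map (D.Δ γ γ⁻¹).toLinearMap LinearMap.id) Qu))
        = D.S γ (colL Qu) * D.S γ (colL Pu) := by
    intro Pu Qu
    induction Pu using TensorProduct.induction_on with
    | zero => simp
    | tmul p1 p2 =>
      induction Qu using TensorProduct.induction_on with
      | zero => simp
      | tmul q1 q2 =>
        rw [TensorProduct.map_tmul, TensorProduct.map_tmul]
        simp only [AlgHom.toLinearMap_apply, LinearMap.id_apply]
        rw [Lapp, θΔΔ, ρapp]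
        simp only [hcolL, LinearMap.comp_apply, TensorProduct.map_tmul,
          LinearEquiv.coe_coe, TensorProduct.lid_tmul, LinearMap.id_apply,
          AlgEquiv.toLinearMap_apply, AlgHom.toLinearMap_apply, map_smul]
        rw [smul_mul_assoc, one_mul, mul_smul_comm, smul_mul_assoc, smul_smul, mul_comm]
      | add v1 v2 h1 h2 =>
        simp only [map_add, TensorProduct.tmul_add, map_add, h1, h2, mul_add, add_mul]
    | add u1 u2 h1 h2 =>
      simp only [map_add, TensorProduct.add_tmul, map_add, h1, h2, mul_add, add_mul]
  have colL_P : ∀ w : H γ, colL ((D.Δ (γ * γ⁻¹) γ) (castAlg k e1 w)) = w := by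
    intro w
    exact counit_collapse_left D γ (γ * γ⁻¹) (mul_inv_cancel γ) e1 w
  -- the right-handed evaluation
  set colR : (H γ ⊗[k] H (γ⁻¹ * γ)) →ₗ[k] H γ :=
    (TensorProduct.rid k (H γ)).toLinearMap ∘ₗ
      TensorProduct.map LinearMap.id
        (D.ε.toLinearMap ∘ₗ (castAlg k (inv_mul_cancel γ)).toLinearMap) with hcolR
  have colR_P : ∀ w : H γ, colR ((D.Δ γ (γ⁻¹ * γ)) (castAlg k e2 w)) = w := by
    intro w
    exact counit_collapse_right D γ (γ⁻¹ * γ) (inv_mul_cancel γ) e2 w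
  set My : (H γ ⊗[k] (H γ⁻¹ ⊗[k] H γ)) →ₗ[k] H γ⁻¹ :=
    LinearMap.mul' k (H γ⁻¹) ∘ₗ
      TensorProduct.map (D.S γ ∘ₗ LinearMap.mulRight k y)
        (LinearMap.mul' k (H γ⁻¹) ∘ₗ TensorProduct.map LinearMap.id (D.S γ)) with hMy
  have Myapp : ∀ (X1 : H γ) (W : H γ⁻¹ ⊗[k] H γ),
      My (X1 ⊗ₜ W) = D.S γ (X1 * y)
        * ((LinearMap.mul' k (H γ⁻¹)) ((TensorProduct.map LinearMap.id (D.S γ)) W)) := by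
    intro X1 W
    simp [hMy, LinearMap.mul'_apply]
  have Ey := (D.Δ γ (γ⁻¹ * γ)) (castAlg k e2 y)
  have stepY : ∀ v : H γ ⊗[k] (H γ⁻¹ ⊗[k] H γ),
      L (((TensorProduct.assoc k (H γ) (H γ⁻¹) (H γ)).symm v) ⊗ₜ
          ((TensorProduct.assoc k (H γ) (H γ⁻¹) (H γ)).symm
            ((TensorProduct.map LinearMap.id (D.Δ γ⁻¹ γ).toLinearMap)
              ((D.Δ γ (γ⁻¹ * γ)) (castAlg k e2 y)))))
        = My v := by
    have inner2 : ∀ (a : H γ) (b : H γ⁻¹) (c : H γ) (X1 : H γ) (W : H γ⁻¹ ⊗[k] H γ),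
        L (((TensorProduct.assoc k (H γ) (H γ⁻¹) (H γ)).symm (a ⊗ₜ (b ⊗ₜ c))) ⊗ₜ
            ((TensorProduct.assoc k (H γ) (H γ⁻¹) (H γ)).symm (X1 ⊗ₜ W)))
          = D.S γ (a * X1) *
              (b * ((LinearMap.mul' k (H γ⁻¹))
                  ((TensorProduct.map LinearMap.id (D.S γ)) W) * D.S γ c)) := by
      intro a b c X1 W
      induction W using TensorProduct.induction_on with
      | zero => simp
      | tmul b' c' =>
        rw [TensorProduct.assoc_symm_tmul, TensorProduct.assoc_symm_tmul, Lapp, ρapp]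
        simp only [hθ, LinearMap.comp_apply, LinearMap.mul'_apply,
          Algebra.TensorProduct.tmul_mul_tmul, TensorProduct.map_tmul, LinearMap.id_apply]
        simp [mul_assoc]
      | add w1 w2 h1 h2 =>
        simp only [TensorProduct.tmul_add, map_add, TensorProduct.tmul_add, h1, h2,
          mul_add, add_mul]
    have inner : ∀ (a : H γ) (b : H γ⁻¹) (c : H γ) (E : H γ ⊗[k] H (γ⁻¹ * γ)),
        L (((TensorProduct.assoc k (H γ) (H γ⁻¹) (H γ)).symm (a ⊗ₜ (b ⊗ₜ c))) ⊗ₜ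
            ((TensorProduct.assoc k (H γ) (H γ⁻¹) (H γ)).symm
              ((TensorProduct.map LinearMap.id (D.Δ γ⁻¹ γ).toLinearMap) E)))
          = D.S γ (a * colR E) * (b * D.S γ c) := by
      intro a b c E
      induction E using TensorProduct.induction_on with
      | zero => simp
      | tmul X1 X2 =>
        rw [TensorProduct.map_tmul, LinearMap.id_apply, AlgHom.toLinearMap_apply, inner2,
          antipode_collapse_SR]
        simp [hcolR, LinearMap.mul'_apply, mul_smul_comm, smul_mul_assoc, map_smul]
      | add w1 w2 h1 h2 =>
        simp only [map_add, TensorProduct.tmul_add, h1, h2, mul_add, add_mul]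
    intro v
    induction v using TensorProduct.induction_on with
    | zero => simp
    | tmul a w =>
      induction w using TensorProduct.induction_on with
      | zero => simp
      | tmul b c =>
        rw [inner, colR_P, Myapp]
        simp [LinearMap.mul'_apply]
      | add w1 w2 h1 h2 =>
        simp only [TensorProduct.tmul_add, map_add, TensorProduct.add_tmul, h1, h2]
    | add v1 v2 h1 h2 =>
      simp only [map_add, TensorProduct.add_tmul, h1, h2]
  have stepX : ∀ E : H γ ⊗[k] H (γ⁻¹ * γ),
      My ((TensorProduct.map LinearMap.id (D.Δ γ⁻¹ γ).toLinearMap) E)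
        = D.S γ ((colR E) * y) := by
    intro E
    induction E using TensorProduct.induction_on with
    | zero => simp
    | tmul X1 X2 =>
      rw [TensorProduct.map_tmul, LinearMap.id_apply, AlgHom.toLinearMap_apply, Myapp,
        antipode_collapse_SR]
      simp [hcolR, mul_smul_comm, smul_mul_assoc, map_smul]
    | add w1 w2 h1 h2 =>
      simp only [map_add, h1, h2, add_mul, map_add]
  have bridge : ∀ w : H γ,
      (TensorProduct.map (D.Δ γ γ⁻¹).toLinearMap LinearMap.id)
          ((D.Δ (γ * γ⁻¹) γ) (castAlg k e1 w))
        = (TensorProduct.assoc k (H γ) (H γ⁻¹) (H γ)).symm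
            ((TensorProduct.map LinearMap.id (D.Δ γ⁻¹ γ).toLinearMap)
              ((D.Δ γ (γ⁻¹ * γ)) (castAlg k e2 w))) := by
    intro w
    have hco := D.coassoc γ γ⁻¹ γ (castAlg k e1 w)
    rw [castAlg_castAlg] at hco
    exact hco
  have final1 := E1 ((D.Δ (γ * γ⁻¹) γ) (castAlg k e1 x)) ((D.Δ (γ * γ⁻¹) γ) (castAlg k e1 y))
  rw [colL_P, colL_P, bridge x, bridge y, stepY, stepX, colR_P] at final1
  exact final1

end HopfGCoalgebra

set_option maxHeartbeats 1000000
set_option synthInstance.maxHeartbeats 400000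
set_option linter.unusedSectionVars false

namespace HopfGCoalgebra

open TensorProduct

variable {k G : Type} [Field k] [Group G] {H : G → Type}
  [∀ γ : G, Ring (H γ)] [∀ γ : G, Algebra k (H γ)]
  (D : HopfGCoalgebra k G H)

private theorem map_comp_right_apply {M N P Q : Type} [AddCommGroup M] [Module k M]
    [AddCommGroup N] [Module k N] [AddCommGroup P] [Module k P] [AddCommGroup Q] [Module k Q]
    (F : P →ₗ[k] Q) (Gm : N →ₗ[k] P) (W : M ⊗[k] N) :
    (TensorProduct.map LinearMap.id F) ((TensorProduct.map LinearMap.id Gm) W)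
      = (TensorProduct.map LinearMap.id (F ∘ₗ Gm)) W := by
  rw [← LinearMap.comp_apply, ← TensorProduct.map_comp, LinearMap.id_comp]

private theorem map_comp_left_apply {M N P Q : Type} [AddCommGroup M] [Module k M]
    [AddCommGroup N] [Module k N] [AddCommGroup P] [Module k P] [AddCommGroup Q] [Module k Q]
    (F : P →ₗ[k] Q) (Gm : N →ₗ[k] P) (W : N ⊗[k] M) :
    (TensorProduct.map F LinearMap.id) ((TensorProduct.map Gm LinearMap.id) W)
      = (TensorProduct.map (F ∘ₗ Gm) LinearMap.id) W := by
  rw [← LinearMap.comp_apply, ← TensorProduct.map_comp, LinearMap.id_comp]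

/-- `S_{β⁻¹}` composed with the transport `H β⁻¹⁻¹ ≃ H β`. -/
noncomputable def Sb (β : G) : H β⁻¹ →ₗ[k] H β :=
  (castAlg k (inv_inv β)).toLinearMap ∘ₗ D.S β⁻¹

variable (α β : G)

/-- The coproduct `Δ_{αβ,β⁻¹}` seen as a map on `H α`. -/
noncomputable def dP : H α →ₗ[k] H (α * β) ⊗[k] H β⁻¹ :=
  (D.Δ (α * β) β⁻¹).toLinearMap ∘ₗ (castAlg k (mul_inv_cancel_right α β).symm).toLinearMap

/-- The map `p ⊗ q ↦ p₍₁₎ ⊗ S(p₍₂₎) q`, inverse to `uMap`. -/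
noncomputable def vMap : (H α ⊗[k] H β) →ₗ[k] (H (α * β) ⊗[k] H β) :=
  (TensorProduct.map LinearMap.id
      (LinearMap.mul' k (H β) ∘ₗ TensorProduct.map (D.Sb β) LinearMap.id))
    ∘ₗ (TensorProduct.assoc k (H (α * β)) (H β⁻¹) (H β)).toLinearMap
    ∘ₗ TensorProduct.map (D.dP α β) LinearMap.id

/-- The map `x ⊗ q ↦ Δ(x)(1 ⊗ q)`. -/
noncomputable def uMap : (H (α * β) ⊗[k] H β) →ₗ[k] (H α ⊗[k] H β) :=
  TensorProduct.lift (LinearMap.mk₂ k (fun x q => (D.Δ α β x) * ((1 : H α) ⊗ₜ q))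
    (fun x x' q => by rw [map_add, add_mul])
    (fun c x q => by rw [map_smul, smul_mul_assoc])
    (fun x q q' => by rw [TensorProduct.tmul_add, mul_add])
    (fun c x q => by rw [TensorProduct.tmul_smul, mul_smul_comm]))

theorem uMap_tmul (x : H (α * β)) (q : H β) :
    D.uMap α β (x ⊗ₜ q) = (D.Δ α β x) * ((1 : H α) ⊗ₜ q) := rfl

theorem vMap_tmul (p : H α) (q : H β) :
    D.vMap α β (p ⊗ₜ q)
      = (TensorProduct.map LinearMap.id
          (LinearMap.mul' k (H β) ∘ₗ TensorProduct.map (D.Sb β) LinearMap.id))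
        ((TensorProduct.assoc k (H (α * β)) (H β⁻¹) (H β)) ((D.dP α β p) ⊗ₜ q)) := by
  simp only [vMap, LinearMap.comp_apply, TensorProduct.map_tmul, LinearMap.id_apply,
    LinearEquiv.coe_coe]

private theorem map_smulRight_one {M N B : Type} [AddCommGroup M] [Module k M]
    [AddCommGroup N] [Module k N] [Ring B] [Algebra k B] (f : N →ₗ[k] k)
    (W : M ⊗[k] N) :
    (TensorProduct.map LinearMap.id (LinearMap.smulRight f (1 : B))) W
      = ((TensorProduct.rid k M) ((TensorProduct.map LinearMap.id f) W)) ⊗ₜ (1 : B) := by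
  induction W using TensorProduct.induction_on with
  | zero => simp
  | tmul u v =>
    simp only [TensorProduct.map_tmul, LinearMap.id_apply, LinearMap.smulRight_apply,
      TensorProduct.rid_tmul, TensorProduct.tmul_smul, TensorProduct.smul_tmul']
  | add w1 w2 h1 h2 => simp only [map_add, h1, h2, TensorProduct.add_tmul]

/-- The key computation `v(Δ(x)) = x ⊗ 1`. -/
theorem vMap_delta (x : H (α * β)) : D.vMap α β (D.Δ α β x) = x ⊗ₜ (1 : H β) := by
  have e1 : α = α * β * β⁻¹ := (mul_inv_cancel_right α β).symm
  have e1' : α * β = α * β * β⁻¹ * β := by rw [mul_inv_cancel_right]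
  have hsplit : TensorProduct.map (D.dP α β) (LinearMap.id : H β →ₗ[k] H β)
      = (TensorProduct.map (D.Δ (α * β) β⁻¹).toLinearMap LinearMap.id)
        ∘ₗ (TensorProduct.map (castAlg k e1).toLinearMap LinearMap.id) := by
    rw [← TensorProduct.map_comp]; rfl
  have hcast : (TensorProduct.map (castAlg k e1).toLinearMap LinearMap.id) (D.Δ α β x)
      = D.Δ (α * β * β⁻¹) β (castAlg k e1' x) :=
    (delta_castAlg_left D β e1 e1' x).symm
  have hco := D.coassoc (α * β) β⁻¹ β (castAlg k e1' x)
  rw [castAlg_castAlg] at hco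
  have hη : (LinearMap.mul' k (H β) ∘ₗ TensorProduct.map (D.Sb β) LinearMap.id)
        ∘ₗ (D.Δ β⁻¹ β).toLinearMap
      = LinearMap.smulRight
          (D.ε.toLinearMap ∘ₗ (castAlg k (inv_mul_cancel β)).toLinearMap) (1 : H β) := by
    apply LinearMap.ext; intro v
    exact D.antipode_left β v
  rw [vMap, LinearMap.comp_apply, LinearMap.comp_apply, hsplit, LinearMap.comp_apply,
    hcast, hco, LinearEquiv.coe_coe, LinearEquiv.apply_symm_apply,
    map_comp_right_apply, hη, map_smulRight_one,
    counit_collapse_right D (α * β) (β⁻¹ * β) (inv_mul_cancel β)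
      (e1'.trans (mul_assoc (α * β) β⁻¹ β)) x]

/-- `v` intertwines right multiplication by `1 ⊗ q`. -/
theorem vMap_mul_one_tmul (m : H α ⊗[k] H β) (q : H β) :
    D.vMap α β (m * ((1 : H α) ⊗ₜ q)) = D.vMap α β m * ((1 : H (α * β)) ⊗ₜ q) := by
  induction m using TensorProduct.induction_on with
  | zero => rw [zero_mul, map_zero, zero_mul]
  | tmul p b =>
    rw [Algebra.TensorProduct.tmul_mul_tmul, mul_one, vMap_tmul, vMap_tmul]
    generalize D.dP α β p = w
    induction w using TensorProduct.induction_on with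
    | zero => simp
    | tmul a s =>
      simp only [TensorProduct.assoc_tmul, TensorProduct.map_tmul, LinearMap.id_apply,
        LinearMap.comp_apply, LinearMap.mul'_apply, Algebra.TensorProduct.tmul_mul_tmul,
        mul_one, mul_assoc]
    | add w1 w2 h1 h2 =>
      simp only [TensorProduct.add_tmul, map_add, h1, h2, add_mul]
  | add m1 m2 h1 h2 => rw [add_mul, map_add, h1, h2, map_add, add_mul]

/-- `u` intertwines right multiplication by `1 ⊗ q`. -/
theorem uMap_mul_one_tmul (w : H (α * β) ⊗[k] H β) (q : H β) :
    D.uMap α β (w * ((1 : H (α * β)) ⊗ₜ q)) = D.uMap α β w * ((1 : H α) ⊗ₜ q) := by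
  induction w using TensorProduct.induction_on with
  | zero => rw [zero_mul, map_zero, zero_mul]
  | tmul x b =>
    rw [Algebra.TensorProduct.tmul_mul_tmul, mul_one, uMap_tmul, uMap_tmul, mul_assoc,
      Algebra.TensorProduct.tmul_mul_tmul, one_mul]
  | add w1 w2 h1 h2 => rw [add_mul, map_add, h1, h2, map_add, add_mul]

/-- `u ∘ v = id` on `p ⊗ 1`. -/
theorem uMap_vMap_one (p : H α) :
    D.uMap α β (D.vMap α β (p ⊗ₜ (1 : H β))) = p ⊗ₜ (1 : H β) := by
  have e1 : α = α * β * β⁻¹ := (mul_inv_cancel_right α β).symm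
  -- first: v(p ⊗ 1) = (map id Sb) (dP p)
  have h1 : D.vMap α β (p ⊗ₜ (1 : H β))
      = (TensorProduct.map LinearMap.id (D.Sb β)) (D.dP α β p) := by
    rw [vMap_tmul]
    generalize D.dP α β p = w
    induction w using TensorProduct.induction_on with
    | zero => simp
    | tmul a s =>
      simp only [TensorProduct.assoc_tmul, TensorProduct.map_tmul, LinearMap.id_apply,
        LinearMap.comp_apply, LinearMap.mul'_apply, mul_one]
    | add w1 w2 hh1 hh2 => simp only [TensorProduct.add_tmul, map_add, hh1, hh2]
  rw [h1]
  -- second: u((map id Sb) w) = (map id (m ∘ (id ⊗ Sb)))(assoc ((map Δ id) w))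
  have h2 : ∀ w : H (α * β) ⊗[k] H β⁻¹,
      D.uMap α β ((TensorProduct.map LinearMap.id (D.Sb β)) w)
        = (TensorProduct.map LinearMap.id
              (LinearMap.mul' k (H β) ∘ₗ TensorProduct.map LinearMap.id (D.Sb β)))
            ((TensorProduct.assoc k (H α) (H β) (H β⁻¹))
              ((TensorProduct.map (D.Δ α β).toLinearMap LinearMap.id) w)) := by
    intro w
    induction w using TensorProduct.induction_on with
    | zero => simp
    | tmul x b =>
      rw [TensorProduct.map_tmul, TensorProduct.map_tmul, LinearMap.id_apply,
        LinearMap.id_apply, AlgHom.toLinearMap_apply, uMap_tmul]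
      generalize D.Δ α β x = z
      induction z using TensorProduct.induction_on with
      | zero => simp
      | tmul x1 x2 =>
        simp only [TensorProduct.assoc_tmul, TensorProduct.map_tmul, LinearMap.id_apply,
          LinearMap.comp_apply, LinearMap.mul'_apply, Algebra.TensorProduct.tmul_mul_tmul,
          mul_one]
      | add z1 z2 hh1 hh2 =>
        simp only [TensorProduct.add_tmul, map_add, hh1, hh2, add_mul]
    | add w1 w2 hh1 hh2 => rw [map_add, map_add, hh1, hh2, map_add, map_add, map_add]
  rw [h2]
  -- now use coassociativity
  have hd : D.dP α β p = D.Δ (α * β) β⁻¹ (castAlg k e1 p) := rfl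
  have hco := D.coassoc α β β⁻¹ (castAlg k e1 p)
  rw [hd, hco, LinearEquiv.apply_symm_apply, castAlg_castAlg]
  have hη : (LinearMap.mul' k (H β) ∘ₗ TensorProduct.map LinearMap.id (D.Sb β))
        ∘ₗ (D.Δ β β⁻¹).toLinearMap
      = LinearMap.smulRight
          (D.ε.toLinearMap ∘ₗ (castAlg k (mul_inv_cancel β)).toLinearMap) (1 : H β) := by
    apply LinearMap.ext; intro v
    exact D.antipode_right β v
  rw [map_comp_right_apply, hη, map_smulRight_one,
    counit_collapse_right D α (β * β⁻¹) (mul_inv_cancel β)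
      (e1.trans (mul_assoc α β β⁻¹)) p]

theorem uMap_vMap (m : H α ⊗[k] H β) : D.uMap α β (D.vMap α β m) = m := by
  induction m using TensorProduct.induction_on with
  | zero => rw [map_zero, map_zero]
  | tmul p q =>
    have : (p ⊗ₜ q : H α ⊗[k] H β) = (p ⊗ₜ (1 : H β)) * ((1 : H α) ⊗ₜ q) := by
      rw [Algebra.TensorProduct.tmul_mul_tmul, mul_one, one_mul]
    rw [this, vMap_mul_one_tmul, uMap_mul_one_tmul, uMap_vMap_one]
  | add m1 m2 h1 h2 => rw [map_add, map_add, h1, h2]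

theorem vMap_uMap (w : H (α * β) ⊗[k] H β) : D.vMap α β (D.uMap α β w) = w := by
  induction w using TensorProduct.induction_on with
  | zero => rw [map_zero, map_zero]
  | tmul x q =>
    rw [uMap_tmul, vMap_mul_one_tmul, vMap_delta, Algebra.TensorProduct.tmul_mul_tmul,
      mul_one, one_mul]
  | add w1 w2 h1 h2 => rw [map_add, map_add, h1, h2]

theorem uMap_equivariant (z : H (α * β)) (w : H (α * β) ⊗[k] H β) :
    D.uMap α β ((TensorProduct.map (LinearMap.mulLeft k z) LinearMap.id) w)
      = (D.Δ α β z) * D.uMap α β w := by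
  induction w using TensorProduct.induction_on with
  | zero => simp
  | tmul x q =>
    rw [TensorProduct.map_tmul, LinearMap.id_apply, LinearMap.mulLeft_apply, uMap_tmul,
      uMap_tmul, map_mul, mul_assoc]
  | add w1 w2 h1 h2 => rw [map_add, map_add, h1, h2, map_add, mul_add]

theorem vMap_equivariant (z : H (α * β)) (m : H α ⊗[k] H β) :
    D.vMap α β ((D.Δ α β z) * m)
      = (TensorProduct.map (LinearMap.mulLeft k z) LinearMap.id) (D.vMap α β m) := by
  conv_lhs => rw [← D.uMap_vMap α β m]
  rw [← uMap_equivariant, vMap_uMap]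

end HopfGCoalgebra

namespace HopfGCoalgebra

open TensorProduct

set_option maxHeartbeats 1000000
set_option synthInstance.maxHeartbeats 400000
set_option linter.unusedSectionVars false

variable {k G : Type} [Field k] [Group G] {H : G → Type}
  [∀ γ : G, Ring (H γ)] [∀ γ : G, Algebra k (H γ)]
  (D : HopfGCoalgebra k G H)

/-- Pivotal collapse: `Σ S(w₍₂₎) g (w₍₁₎ z) = ε(w) • (g z)`. -/
theorem pivot_collapse (g : ∀ γ : G, (H γ)ˣ) (hpiv : D.IsPivot g) (β : G) (z : H β)
    (w : H (β * β⁻¹)) :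
    (LinearMap.mul' k (H β))
      ((TensorProduct.map (D.Sb β)
          (LinearMap.mulLeft k ((g β : H β)) ∘ₗ LinearMap.mulRight k z))
        ((TensorProduct.comm k (H β) (H β⁻¹)) (D.Δ β β⁻¹ w)))
      = D.ε (castAlg k (mul_inv_cancel β) w) • ((g β : H β) * z) := by
  have stepa : (LinearMap.mul' k (H β)) ∘ₗ
      (TensorProduct.map (D.Sb β)
        (LinearMap.mulLeft k ((g β : H β)) ∘ₗ LinearMap.mulRight k z))
      ∘ₗ (TensorProduct.comm k (H β) (H β⁻¹)).toLinearMap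
      = (LinearMap.mulRight k ((g β : H β) * z)) ∘ₗ (castAlg k (inv_inv β)).toLinearMap
        ∘ₗ (D.S β⁻¹) ∘ₗ (LinearMap.mul' k (H β⁻¹))
        ∘ₗ (TensorProduct.map (D.S β) LinearMap.id) := by
    apply TensorProduct.ext'
    intro w1 w2
    simp only [LinearMap.comp_apply, LinearEquiv.coe_coe, TensorProduct.comm_tmul,
      TensorProduct.map_tmul, LinearMap.mul'_apply, LinearMap.mulLeft_apply,
      LinearMap.mulRight_apply, LinearMap.id_apply, AlgEquiv.toLinearMap_apply]
    rw [D.S_mul β⁻¹ (D.S β w1) w2, map_mul (castAlg k (inv_inv β))]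
    have hg : (g β : H β) * w1 = castAlg k (inv_inv β) (D.S β⁻¹ (D.S β w1)) * (g β : H β) := by
      rw [hpiv.antipode β w1, mul_assoc, mul_assoc, Units.inv_mul, mul_one]
    rw [show (g β : H β) * (w1 * z) = ((g β : H β) * w1) * z from (mul_assoc _ _ _).symm, hg]
    simp only [Sb, LinearMap.comp_apply, AlgEquiv.toLinearMap_apply, mul_assoc]
  have h2 := LinearMap.congr_fun stepa (D.Δ β β⁻¹ w)
  simp only [LinearMap.comp_apply, LinearEquiv.coe_coe] at h2
  rw [h2, antipode_collapse_SL D β w, map_smul, D.S_one, map_smul]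
  simp only [AlgEquiv.toLinearMap_apply, map_one, LinearMap.mulRight_apply,
    smul_mul_assoc, one_mul]
  congr 1
  convert one_mul ((g β : H β) * z) using 2
  exact map_one (castAlg k (inv_inv β))

section TrR

variable [∀ γ : G, FiniteDimensional k (H γ)]

private theorem trR_term {β : G} (P : Type) [AddCommGroup P] [Module k P] (gβ : H β)
    (φd : Module.Dual k (H β)) (X : P ⊗[k] H β) :
    (TensorProduct.rid k P)
      ((TensorProduct.map LinearMap.id
          (contractRight k (H β) ∘ₗ
            TensorProduct.map (Algebra.lsmul k k (H β) gβ) LinearMap.id))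
        ((TensorProduct.assoc k P (H β) (Module.Dual k (H β))) (X ⊗ₜ φd)))
      = (TensorProduct.rid k P)
          ((TensorProduct.map LinearMap.id (φd ∘ₗ LinearMap.mulLeft k gβ)) X) := by
  induction X using TensorProduct.induction_on with
  | zero => simp only [TensorProduct.zero_tmul, map_zero]
  | tmul u w =>
    simp only [TensorProduct.assoc_tmul, TensorProduct.map_tmul, LinearMap.id_apply,
      LinearMap.comp_apply, contractRight_apply, TensorProduct.rid_tmul,
      LinearMap.mulLeft_apply]
    rw [show (Algebra.lsmul k k (H β) gβ) w = gβ * w from rfl]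
  | add X1 X2 h1 h2 =>
    simp only [TensorProduct.add_tmul, map_add, h1, h2]

private theorem trR_formula {β : G} (P : Type) [AddCommGroup P] [Module k P]
    (gβ : H β) (f : (P ⊗[k] H β) →ₗ[k] (P ⊗[k] H β)) (p : P) :
    trR β P (H β) gβ f p
      = ∑ i : Module.Basis.ofVectorSpaceIndex k (H β),
          (TensorProduct.rid k P)
            ((TensorProduct.map LinearMap.id
                (((Module.Basis.ofVectorSpace k (H β)).coord i) ∘ₗ LinearMap.mulLeft k gβ))
              (f (p ⊗ₜ (Module.Basis.ofVectorSpace k (H β)) i))) := by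
  rw [trR]
  simp only [LinearMap.comp_apply, LinearEquiv.coe_coe]
  rw [TensorProduct.rid_symm_apply, TensorProduct.map_tmul, LinearMap.id_apply,
    coevaluation_apply_one]
  simp only [TensorProduct.tmul_sum, map_sum]
  refine Finset.sum_congr rfl (fun i _ => ?_)
  rw [TensorProduct.assoc_symm_tmul, TensorProduct.map_tmul, LinearMap.id_apply]
  exact trR_term P gβ _ _

variable (α β : G)

/-- The contraction `(f ⊗ s) ↦ φ(s (g f))`. -/
noncomputable def psiMap (φ : Module.Dual k (H β)) (gb : H β) :
    (H β ⊗[k] H β) →ₗ[k] k :=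
  φ ∘ₗ LinearMap.mul' k (H β)
    ∘ₗ TensorProduct.map LinearMap.id (LinearMap.mulLeft k gb)
    ∘ₗ (TensorProduct.comm k (H β) (H β)).toLinearMap

private theorem psi_contract (φ : Module.Dual k (H β)) (gb : H β)
    (X : H α ⊗[k] H β) (s : H β) :
    (TensorProduct.rid k (H α))
      ((TensorProduct.map LinearMap.id (psiMap β φ gb))
        ((TensorProduct.assoc k (H α) (H β) (H β)) (X ⊗ₜ s)))
      = (TensorProduct.rid k (H α))
          ((TensorProduct.map LinearMap.id
              (φ ∘ₗ LinearMap.mulLeft k s ∘ₗ LinearMap.mulLeft k gb)) X) := by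
  induction X using TensorProduct.induction_on with
  | zero => simp only [TensorProduct.zero_tmul, map_zero]
  | tmul e f =>
    simp only [TensorProduct.assoc_tmul, TensorProduct.map_tmul, LinearMap.id_apply,
      psiMap, LinearMap.comp_apply, LinearEquiv.coe_coe, TensorProduct.comm_tmul,
      LinearMap.mul'_apply, LinearMap.mulLeft_apply]
  | add X1 X2 h1 h2 => simp only [TensorProduct.add_tmul, map_add, h1, h2]

/-- The map `Ξ`. -/
noncomputable def XiMap (φ : Module.Dual k (H β)) (gb : H β) (hh : H (α * β)) :
    (H (α * β) ⊗[k] H β⁻¹) →ₗ[k] H α :=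
  (TensorProduct.rid k (H α)).toLinearMap
    ∘ₗ TensorProduct.map LinearMap.id (psiMap β φ gb)
    ∘ₗ (TensorProduct.assoc k (H α) (H β) (H β)).toLinearMap
    ∘ₗ TensorProduct.map ((D.Δ α β).toLinearMap ∘ₗ LinearMap.mulRight k hh) (D.Sb β)

theorem XiMap_tmul (φ : Module.Dual k (H β)) (gb : H β) (hh : H (α * β))
    (a : H (α * β)) (b : H β⁻¹) :
    D.XiMap α β φ gb hh (a ⊗ₜ b)
      = (TensorProduct.rid k (H α))
          ((TensorProduct.map LinearMap.id
              (φ ∘ₗ LinearMap.mulLeft k (D.Sb β b) ∘ₗ LinearMap.mulLeft k gb))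
            (D.Δ α β (a * hh))) := by
  rw [XiMap]
  simp only [LinearMap.comp_apply, TensorProduct.map_tmul, LinearEquiv.coe_coe,
    LinearMap.mulRight_apply, AlgHom.toLinearMap_apply]
  exact psi_contract α β φ gb _ _

/-- `B_φ` with fixed second argument, as a linear map. -/
noncomputable def BBfun (φ : Module.Dual k (H β)) (q : H β) :
    (H (α * β) ⊗[k] H β⁻¹) →ₗ[k] H (α * β) :=
  (TensorProduct.rid k (H (α * β))).toLinearMap
    ∘ₗ TensorProduct.map LinearMap.id (φ ∘ₗ LinearMap.mulRight k q ∘ₗ D.Sb β)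

theorem Bk_eq (φ : Module.Dual k (H β)) (p : H α) (q : H β) :
    (TensorProduct.rid k (H (α * β)))
        ((TensorProduct.map LinearMap.id φ) (D.vMap α β (p ⊗ₜ q)))
      = D.BBfun α β φ q (D.dP α β p) := by
  rw [vMap_tmul]
  generalize D.dP α β p = w
  induction w using TensorProduct.induction_on with
  | zero => simp only [TensorProduct.zero_tmul, map_zero]
  | tmul a b =>
    simp only [TensorProduct.assoc_tmul, TensorProduct.map_tmul, LinearMap.id_apply,
      LinearMap.comp_apply, LinearMap.mul'_apply, BBfun, LinearEquiv.coe_coe,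
      LinearMap.mulRight_apply]
  | add w1 w2 h1 h2 => simp only [TensorProduct.add_tmul, map_add, h1, h2]

end TrR

end HopfGCoalgebra

namespace HopfGCoalgebra

open TensorProduct

set_option maxHeartbeats 1000000
set_option synthInstance.maxHeartbeats 400000
set_option linter.unusedSectionVars false

variable {k G : Type} [Field k] [Group G] {H : G → Type}
  [∀ γ : G, Ring (H γ)] [∀ γ : G, Algebra k (H γ)]
  [∀ γ : G, FiniteDimensional k (H γ)]
  (D : HopfGCoalgebra k G H)
  (α β : G)

/-- Dual-basis contraction: summing the partial traces gives `Ξ`. -/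
theorem K3a (φ : Module.Dual k (H β)) (gb : H β) (hh : H (α * β))
    (w : H (α * β) ⊗[k] H β⁻¹) :
    ∑ i : Module.Basis.ofVectorSpaceIndex k (H β),
      (TensorProduct.rid k (H α))
        ((TensorProduct.map LinearMap.id
            (((Module.Basis.ofVectorSpace k (H β)).coord i) ∘ₗ LinearMap.mulLeft k gb))
          (D.Δ α β ((D.BBfun α β φ ((Module.Basis.ofVectorSpace k (H β)) i) w) * hh)))
      = D.XiMap α β φ gb hh w := by
  induction w using TensorProduct.induction_on with
  | zero =>
    simp only [map_zero, zero_mul, Finset.sum_const_zero]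
  | tmul a b =>
    have hBB : ∀ q : H β, D.BBfun α β φ q (a ⊗ₜ b) = φ (D.Sb β b * q) • a := by
      intro q
      simp only [BBfun, LinearMap.comp_apply, TensorProduct.map_tmul, LinearMap.id_apply,
        LinearEquiv.coe_coe, TensorProduct.rid_tmul, LinearMap.mulRight_apply]
    simp only [hBB, smul_mul_assoc, map_smul]
    rw [XiMap_tmul]
    generalize D.Δ α β (a * hh) = X
    induction X using TensorProduct.induction_on with
    | zero => simp only [map_zero, smul_zero, Finset.sum_const_zero]
    | tmul e f =>
      simp only [TensorProduct.map_tmul, LinearMap.id_apply, LinearMap.comp_apply,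
        TensorProduct.rid_tmul, LinearMap.mulLeft_apply, Module.Basis.coord_apply]
      have hc : ∀ i : Module.Basis.ofVectorSpaceIndex k (H β),
          φ (D.Sb β b * (Module.Basis.ofVectorSpace k (H β)) i) •
              (((Module.Basis.ofVectorSpace k (H β)).repr (gb * f)) i • e)
            = (((Module.Basis.ofVectorSpace k (H β)).repr (gb * f)) i
                * φ (D.Sb β b * (Module.Basis.ofVectorSpace k (H β)) i)) • e := by
        intro i; rw [smul_smul, mul_comm]
      rw [Finset.sum_congr rfl (fun i _ => hc i), ← Finset.sum_smul]
      congr 1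
      conv_rhs => rw [← Module.Basis.sum_repr (Module.Basis.ofVectorSpace k (H β)) (gb * f)]
      rw [Finset.mul_sum, map_sum]
      refine Finset.sum_congr rfl (fun i _ => ?_)
      rw [mul_smul_comm, map_smul, smul_eq_mul]
    | add X1 X2 h1 h2 =>
      simp only [map_add, smul_add, Finset.sum_add_distrib, h1, h2]
  | add w1 w2 h1 h2 =>
    simp only [map_add, add_mul, Finset.sum_add_distrib, h1, h2]

/-- The evaluation of `Ξ` on `dP p`: the symmetrised-integral collapse. -/
theorem XiMap_dP (g : ∀ γ : G, (H γ)ˣ) (hpiv : D.IsPivot g) (φ : Module.Dual k (H β))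
    (hh : H (α * β)) (p : H α) :
    D.XiMap α β φ (g β : H β) hh (D.dP α β p)
      = p * ((TensorProduct.rid k (H α))
          ((TensorProduct.map LinearMap.id (φ ∘ₗ LinearMap.mulLeft k (g β : H β)))
            (D.Δ α β hh))) := by
  have e1 : α = α * β * β⁻¹ := (mul_inv_cancel_right α β).symm
  set gb : H β := (g β : H β) with hgb
  set Y := D.Δ α β hh with hY
  -- rewrite the first factor of XiMap
  have hfac : TensorProduct.map ((D.Δ α β).toLinearMap ∘ₗ LinearMap.mulRight k hh) (D.Sb β)
      = (TensorProduct.map (LinearMap.mulRight k Y) LinearMap.id)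
        ∘ₗ (TensorProduct.map LinearMap.id (D.Sb β))
        ∘ₗ (TensorProduct.map (D.Δ α β).toLinearMap LinearMap.id) := by
    apply TensorProduct.ext'
    intro a b
    simp only [LinearMap.comp_apply, TensorProduct.map_tmul, LinearMap.id_apply,
      AlgHom.toLinearMap_apply, LinearMap.mulRight_apply, map_mul, hY]
  have hdP : D.dP α β p = D.Δ (α * β) β⁻¹ (castAlg k e1 p) := rfl
  have hco := D.coassoc α β β⁻¹ (castAlg k e1 p)
  rw [castAlg_castAlg] at hco
  rw [XiMap, LinearMap.comp_apply, LinearMap.comp_apply, LinearMap.comp_apply, hfac,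
    LinearMap.comp_apply, LinearMap.comp_apply, hdP, hco]
  set E := D.Δ α (β * β⁻¹) (castAlg k (e1.trans (mul_assoc α β β⁻¹)) p) with hE
  -- the core computation
  have core : ∀ (E' : H α ⊗[k] H (β * β⁻¹)) (Y' : H α ⊗[k] H β),
      (TensorProduct.rid k (H α))
        ((TensorProduct.map LinearMap.id (psiMap β φ gb))
          ((TensorProduct.assoc k (H α) (H β) (H β))
            ((TensorProduct.map (LinearMap.mulRight k Y') LinearMap.id)
              ((TensorProduct.map LinearMap.id (D.Sb β))
                ((TensorProduct.assoc k (H α) (H β) (H β⁻¹)).symm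
                  ((TensorProduct.map LinearMap.id (D.Δ β β⁻¹).toLinearMap) E'))))))
        = ((TensorProduct.rid k (H α))
            ((TensorProduct.map LinearMap.id
                (D.ε.toLinearMap ∘ₗ (castAlg k (mul_inv_cancel β)).toLinearMap)) E'))
          * ((TensorProduct.rid k (H α))
              ((TensorProduct.map LinearMap.id (φ ∘ₗ LinearMap.mulLeft k gb)) Y')) := by
    intro E' Y'
    induction E' using TensorProduct.induction_on with
    | zero => simp only [map_zero, zero_mul]
    | tmul p1 P2 =>
      rw [TensorProduct.map_tmul, LinearMap.id_apply, AlgHom.toLinearMap_apply]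
      induction Y' using TensorProduct.induction_on with
      | zero =>
        simp only [LinearMap.mulRight_zero_eq_zero, TensorProduct.map_zero_left,
          LinearMap.zero_apply, map_zero, mul_zero]
      | tmul h1 h2 =>
        -- sub-claim over general W
        have sub1 : ∀ W : H β ⊗[k] H β⁻¹,
            (TensorProduct.rid k (H α))
              ((TensorProduct.map LinearMap.id (psiMap β φ gb))
                ((TensorProduct.assoc k (H α) (H β) (H β))
                  ((TensorProduct.map (LinearMap.mulRight k (h1 ⊗ₜ[k] h2)) LinearMap.id)
                    ((TensorProduct.map LinearMap.id (D.Sb β))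
                      ((TensorProduct.assoc k (H α) (H β) (H β⁻¹)).symm (p1 ⊗ₜ W))))))
              = φ ((LinearMap.mul' k (H β))
                  ((TensorProduct.map (D.Sb β)
                      (LinearMap.mulLeft k gb ∘ₗ LinearMap.mulRight k h2))
                    ((TensorProduct.comm k (H β) (H β⁻¹)) W))) • (p1 * h1) := by
          intro W
          induction W using TensorProduct.induction_on with
          | zero => simp only [TensorProduct.tmul_zero, map_zero, zero_smul]
          | tmul w1 w2 =>
            simp only [TensorProduct.assoc_symm_tmul, TensorProduct.map_tmul,
              LinearMap.id_apply, LinearMap.mulRight_apply,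
              Algebra.TensorProduct.tmul_mul_tmul, TensorProduct.assoc_tmul,
              LinearEquiv.coe_coe, TensorProduct.comm_tmul, LinearMap.mul'_apply,
              LinearMap.comp_apply, LinearMap.mulLeft_apply, TensorProduct.rid_tmul,
              psiMap]
          | add W1 W2 hW1 hW2 =>
            simp only [TensorProduct.tmul_add, map_add, hW1, hW2, add_smul]
        rw [sub1 (D.Δ β β⁻¹ P2), pivot_collapse D g hpiv β h2 P2]
        simp only [map_smul, TensorProduct.map_tmul, LinearMap.id_apply,
          LinearMap.comp_apply, TensorProduct.rid_tmul, LinearMap.mulLeft_apply,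
          AlgEquiv.toLinearMap_apply, AlgHom.toLinearMap_apply, smul_eq_mul]
        rw [smul_mul_assoc, mul_smul_comm, smul_smul]
      | add Y1 Y2 hY1 hY2 =>
        have hmr : LinearMap.mulRight k (Y1 + Y2)
            = LinearMap.mulRight k Y1 + LinearMap.mulRight k Y2 :=
          LinearMap.ext fun m => mul_add m Y1 Y2
        rw [hmr, TensorProduct.map_add_left]
        simp only [LinearMap.add_apply, map_add, hY1, hY2, mul_add]
    | add E1 E2 hE1 hE2 =>
      simp only [map_add, hE1, hE2, add_mul]
  simp only [LinearEquiv.coe_coe]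
  rw [core E Y,
    counit_collapse_right D α (β * β⁻¹) (mul_inv_cancel β) (e1.trans (mul_assoc α β β⁻¹)) p]

/-- Main partial-trace computation: `tr^r(F) = R_c`. -/
theorem trR_F (g : ∀ γ : G, (H γ)ˣ) (hpiv : D.IsPivot g) (φ : Module.Dual k (H β))
    (hh : H (α * β)) (Fk : (H α ⊗[k] H β) →ₗ[k] (H α ⊗[k] H β))
    (hFk : ∀ m, Fk m = D.Δ α β
        (((TensorProduct.rid k (H (α * β)))
            ((TensorProduct.map LinearMap.id φ) (D.vMap α β m))) * hh))
    (p : H α) :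
    trR β (H α) (H β) ((g β : H β)) Fk p
      = p * ((TensorProduct.rid k (H α))
          ((TensorProduct.map LinearMap.id (φ ∘ₗ LinearMap.mulLeft k (g β : H β)))
            (D.Δ α β hh))) := by
  rw [trR_formula]
  have hsummand : ∀ i : Module.Basis.ofVectorSpaceIndex k (H β),
      Fk (p ⊗ₜ (Module.Basis.ofVectorSpace k (H β)) i)
        = D.Δ α β ((D.BBfun α β φ ((Module.Basis.ofVectorSpace k (H β)) i) (D.dP α β p)) * hh) := by
    intro i
    rw [hFk, Bk_eq]
  simp only [hsummand]
  rw [D.K3a α β φ (g β : H β) hh (D.dP α β p), D.XiMap_dP α β g hpiv φ hh p]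

end HopfGCoalgebra

set_option maxHeartbeats 1600000 in
set_option synthInstance.maxHeartbeats 400000 in
set_option linter.unusedSectionVars false in
open HopfGCoalgebra in
/-- For a right modified trace `t` on `H`-pmod, the family `ν_α(h) := t_{H_α}(R_h)` satisfies
the defining relation of a symmetrised right `G`-integral:
`ν_α(h₍₁₎) • g_β h₍₂₎ = ν_{αβ}(h) • 1`; equivalently `x ↦ ν_α(g_α⁻¹ x)` is a right
`G`-integral. -/
theorem right_modified_trace_gives_symmetrised_integral
    {k G : Type} [Field k] [Group G] {H : G → Type}
    [∀ γ : G, Ring (H γ)] [∀ γ : G, Algebra k (H γ)] [∀ γ : G, FiniteDimensional k (H γ)]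
    (D : HopfGCoalgebra k G H) (g : ∀ γ : G, (H γ)ˣ) (hpiv : D.IsPivot g)
    (huni : D.IsUnimodular)
    (t : TraceData k G H) (ht : D.IsRightModifiedTrace g t) :
    (∀ (α β : G) (h : H (α * β)),
        (TensorProduct.lid k (H β))
          ((TensorProduct.map (nuForm t α) (LinearMap.mulLeft k (g β : H β)))
            (D.Δ α β h))
          = nuForm t (α * β) h • 1)
    ∧ D.IsRightIntegral
        (fun γ : G => nuForm t γ ∘ₗ LinearMap.mulLeft k (((g γ)⁻¹ : (H γ)ˣ) : H γ)) := by
  obtain ⟨hcyc, hpt⟩ := ht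
  have main : ∀ (α β : G) (h : H (α * β)),
      (TensorProduct.lid k (H β))
        ((TensorProduct.map (nuForm t α) (LinearMap.mulLeft k (g β : H β))) (D.Δ α β h))
        = nuForm t (α * β) h • 1 := by
    intro α β h
    -- it suffices to test against all linear forms
    have hsep : ∀ (v w : H β), (∀ φ : Module.Dual k (H β), φ v = φ w) → v = w := by
      intro v w hvw
      rw [← sub_eq_zero, ← Module.forall_dual_apply_eq_zero_iff k (v - w)]
      intro φ
      rw [map_sub, hvw φ, sub_self]
    apply hsep
    intro φ
    -- module structures
    letI instM := D.tensorModule α β (α * β) rfl (H α) (H β)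
    haveI instTower := D.tensorModuleTower α β (α * β) rfl (H α) (H β)
    have hsmul : ∀ (z : H (α * β)) (m : H α ⊗[k] H β), z • m = (D.Δ α β z) * m := by
      intro z m
      show (D.deltaRep α β (α * β) rfl (H α) (H β)) z m = _
      have hrep : (D.deltaRep α β (α * β) rfl (H α) (H β)) z
          = Module.endTensorEndAlgHom
              ((Algebra.TensorProduct.map (Algebra.lsmul k k (H α)) (Algebra.lsmul k k (H β)))
                (D.Δ α β z)) := rfl
      rw [hrep]
      generalize D.Δ α β z = w
      induction w using TensorProduct.induction_on with
      | zero => simp only [map_zero, LinearMap.zero_apply, zero_mul]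
      | tmul a b =>
        rw [Algebra.TensorProduct.map_tmul, Module.endTensorEndAlgHom_apply]
        induction m using TensorProduct.induction_on with
        | zero => simp only [map_zero, mul_zero]
        | tmul p q =>
          rw [TensorProduct.AlgebraTensorModule.map_tmul,
            Algebra.TensorProduct.tmul_mul_tmul]
          rfl
        | add m1 m2 hm1 hm2 => rw [map_add, hm1, hm2, mul_add]
      | add w1 w2 hw1 hw2 => rw [map_add, map_add, LinearMap.add_apply, hw1, hw2, add_mul]
    -- the H_{αβ}-linear maps
    set Bk : (H α ⊗[k] H β) →ₗ[k] H (α * β) :=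
      (TensorProduct.rid k (H (α * β))).toLinearMap
        ∘ₗ TensorProduct.map LinearMap.id φ ∘ₗ D.vMap α β with hBk
    have hBsmul : ∀ (z : H (α * β)) (m : H α ⊗[k] H β), Bk (z • m) = z * Bk m := by
      intro z m
      rw [hsmul]
      simp only [hBk, LinearMap.comp_apply]
      rw [D.vMap_equivariant α β z m]
      generalize D.vMap α β m = w
      induction w using TensorProduct.induction_on with
      | zero => simp only [map_zero, mul_zero]
      | tmul a b =>
        simp only [TensorProduct.map_tmul, LinearMap.id_apply, LinearMap.mulLeft_apply,
          LinearEquiv.coe_toLinearMap, TensorProduct.rid_tmul, mul_smul_comm]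
      | add w1 w2 h1 h2 => rw [map_add, map_add, map_add, h1, h2, map_add, map_add, mul_add]
    let Bφ : (H α ⊗[k] H β) →ₗ[H (α * β)] H (α * β) :=
      { toFun := Bk, map_add' := Bk.map_add,
        map_smul' := fun z m => by
          simp only [RingHom.id_apply, smul_eq_mul]; exact hBsmul z m }
    let ιh : H (α * β) →ₗ[H (α * β)] (H α ⊗[k] H β) :=
      { toFun := fun x => D.Δ α β (x * h),
        map_add' := fun x y => by rw [add_mul, map_add],
        map_smul' := fun z x => by
          simp only [RingHom.id_apply, smul_eq_mul]
          rw [mul_assoc, map_mul, ← hsmul] }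
    -- projectivity of the tensor module
    have husmul : ∀ (z : H (α * β)) (w : H (α * β) ⊗[k] H β),
        D.uMap α β (z • w) = z • D.uMap α β w := by
      intro z w
      rw [hsmul]
      have hzw : z • w = (TensorProduct.map (LinearMap.mulLeft k z) LinearMap.id) w := by
        induction w using TensorProduct.induction_on with
        | zero => rw [smul_zero, map_zero]
        | tmul x q =>
          rw [TensorProduct.smul_tmul', TensorProduct.map_tmul, LinearMap.id_apply,
            LinearMap.mulLeft_apply, smul_eq_mul]
        | add w1 w2 h1 h2 => rw [smul_add, map_add, h1, h2]
      rw [hzw, D.uMap_equivariant α β z w]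
    let uA : (H (α * β) ⊗[k] H β) →ₗ[H (α * β)] (H α ⊗[k] H β) :=
      { toFun := D.uMap α β, map_add' := (D.uMap α β).map_add,
        map_smul' := fun z w => by simp only [RingHom.id_apply]; exact husmul z w }
    have hvsmul : ∀ (z : H (α * β)) (m : H α ⊗[k] H β),
        D.vMap α β (z • m) = z • D.vMap α β m := by
      intro z m
      rw [hsmul, D.vMap_equivariant α β z m]
      have hzw : z • D.vMap α β m
          = (TensorProduct.map (LinearMap.mulLeft k z) LinearMap.id) (D.vMap α β m) := by
        generalize D.vMap α β m = w
        induction w using TensorProduct.induction_on with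
        | zero => rw [smul_zero, map_zero]
        | tmul x q =>
          rw [TensorProduct.smul_tmul', TensorProduct.map_tmul, LinearMap.id_apply,
            LinearMap.mulLeft_apply, smul_eq_mul]
        | add w1 w2 h1 h2 => rw [smul_add, map_add, h1, h2]
      rw [hzw]
    let vA : (H α ⊗[k] H β) →ₗ[H (α * β)] (H (α * β) ⊗[k] H β) :=
      { toFun := D.vMap α β, map_add' := (D.vMap α β).map_add,
        map_smul' := fun z m => by simp only [RingHom.id_apply]; exact hvsmul z m }
    haveI hfree : Module.Free (H (α * β)) (H (α * β) ⊗[k] H β) :=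
      Module.Free.of_basis
        (Algebra.TensorProduct.basis (H (α * β)) (Module.Basis.ofVectorSpace k (H β)))
    haveI hproj : Module.Projective (H (α * β)) (H α ⊗[k] H β) :=
      Module.Projective.of_split vA uA
        (LinearMap.ext fun m => D.uMap_vMap α β m)
    -- cyclicity
    have hc := hcyc (α * β) (H α ⊗[k] H β) (H (α * β)) Bφ ιh
    have hBι : Bφ.comp ιh = φ 1 • rmul (α * β) h := by
      apply LinearMap.ext; intro x
      show Bk (D.Δ α β (x * h)) = (φ 1 • rmul (α * β) h) x
      simp only [hBk, LinearMap.comp_apply]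
      rw [D.vMap_delta α β (x * h)]
      simp only [TensorProduct.map_tmul, LinearMap.id_apply,
        LinearEquiv.coe_toLinearMap, TensorProduct.rid_tmul, LinearMap.smul_apply]
      rfl
    -- partial trace
    set cElt : H α := (TensorProduct.rid k (H α))
        ((TensorProduct.map LinearMap.id (φ ∘ₗ LinearMap.mulLeft k (g β : H β)))
          (D.Δ α β h)) with hcElt
    have htr : (rmul α cElt).restrictScalars k
        = trR β (H α) (H β) (g β : H β) ((ιh.comp Bφ).restrictScalars k) := by
      apply LinearMap.ext; intro p
      have := D.trR_F α β g hpiv φ h ((ιh.comp Bφ).restrictScalars k) (fun m => rfl) p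
      rw [this]
      rfl
    have hp := hpt α β (H α) (H β) (ιh.comp Bφ) (rmul α cElt) htr
    -- combine
    have key : nuForm t α cElt = φ 1 * nuForm t (α * β) h := by
      have e1 : nuForm t α cElt = t α (H α) (rmul α cElt) := rfl
      rw [e1, ← hp, hc, hBι, map_smul, smul_eq_mul]
      rfl
    -- final pairing computation
    have hφL : ∀ w : H α ⊗[k] H β,
        φ ((TensorProduct.lid k (H β))
            ((TensorProduct.map (nuForm t α) (LinearMap.mulLeft k (g β : H β))) w))
          = nuForm t α ((TensorProduct.rid k (H α))
              ((TensorProduct.map LinearMap.id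
                  (φ ∘ₗ LinearMap.mulLeft k (g β : H β))) w)) := by
      intro w
      induction w using TensorProduct.induction_on with
      | zero => simp only [map_zero]
      | tmul a b =>
        simp only [TensorProduct.map_tmul, LinearMap.id_apply, TensorProduct.lid_tmul,
          TensorProduct.rid_tmul, map_smul, smul_eq_mul, LinearMap.comp_apply]
        rw [mul_comm]
      | add w1 w2 h1 h2 => rw [map_add, map_add, map_add, map_add, map_add, map_add, h1, h2]
    rw [hφL (D.Δ α β h), ← hcElt, key, map_smul, smul_eq_mul, mul_comm]
  refine ⟨main, ?_⟩
  intro α β x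
  have h1 := main α β ((((g (α * β))⁻¹ : (H (α * β))ˣ) : H (α * β)) * x)
  have hginv : D.Δ α β ((((g (α * β))⁻¹ : (H (α * β))ˣ) : H (α * β)))
      = ((((g α)⁻¹ : (H α)ˣ) : H α) ⊗ₜ[k] (((g β)⁻¹ : (H β)ˣ) : H β)) := by
    have h2 : D.Δ α β ((g (α * β) : H (α * β))) = (g α : H α) ⊗ₜ[k] (g β : H β) :=
      hpiv.delta α β
    have h3 : D.Δ α β ((((g (α * β))⁻¹ : (H (α * β))ˣ) : H (α * β)))
        * D.Δ α β ((g (α * β) : H (α * β))) = 1 := by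
      rw [← map_mul, Units.inv_mul, map_one]
    have h4 : ((g α : H α) ⊗ₜ[k] (g β : H β))
        * ((((g α)⁻¹ : (H α)ˣ) : H α) ⊗ₜ[k] (((g β)⁻¹ : (H β)ˣ) : H β)) = 1 := by
      rw [Algebra.TensorProduct.tmul_mul_tmul, Units.mul_inv, Units.mul_inv,
        Algebra.TensorProduct.one_def]
    calc D.Δ α β ((((g (α * β))⁻¹ : (H (α * β))ˣ) : H (α * β)))
        = D.Δ α β ((((g (α * β))⁻¹ : (H (α * β))ˣ) : H (α * β)))
          * (((g α : H α) ⊗ₜ[k] (g β : H β))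
            * ((((g α)⁻¹ : (H α)ˣ) : H α) ⊗ₜ[k] (((g β)⁻¹ : (H β)ˣ) : H β))) := by
          rw [h4, mul_one]
      _ = (D.Δ α β ((((g (α * β))⁻¹ : (H (α * β))ˣ) : H (α * β)))
            * D.Δ α β ((g (α * β) : H (α * β))))
          * ((((g α)⁻¹ : (H α)ˣ) : H α) ⊗ₜ[k] (((g β)⁻¹ : (H β)ˣ) : H β)) := by
          rw [← mul_assoc, h2]
      _ = ((((g α)⁻¹ : (H α)ˣ) : H α) ⊗ₜ[k] (((g β)⁻¹ : (H β)ˣ) : H β)) := by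
          rw [h3, one_mul]
  rw [map_mul, hginv] at h1
  have hmain2 : ∀ w : H α ⊗[k] H β,
      (TensorProduct.lid k (H β))
        ((TensorProduct.map (nuForm t α) (LinearMap.mulLeft k (g β : H β)))
          (((((g α)⁻¹ : (H α)ˣ) : H α) ⊗ₜ[k] (((g β)⁻¹ : (H β)ˣ) : H β)) * w))
        = (TensorProduct.lid k (H β))
            ((TensorProduct.map
                (nuForm t α ∘ₗ LinearMap.mulLeft k (((g α)⁻¹ : (H α)ˣ) : H α))
                LinearMap.id) w) := by
    intro w
    induction w using TensorProduct.induction_on with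
    | zero => simp only [mul_zero, map_zero]
    | tmul a b =>
      rw [Algebra.TensorProduct.tmul_mul_tmul, TensorProduct.map_tmul,
        TensorProduct.map_tmul]
      simp only [LinearMap.mulLeft_apply, LinearMap.comp_apply, LinearMap.id_apply,
        Units.mul_inv_cancel_left]
    | add w1 w2 hh1 hh2 => rw [mul_add, map_add, map_add, hh1, hh2, map_add, map_add]
  rw [hmain2 (D.Δ α β x)] at h1
  exact h1
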